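/- For the three-species GLV system, all eigenvalues of the Jacobian at the coexistence equilibrium s* = (ρ/(γ+c+e))·(1,1,1) have negative real part if and only if γ > (c+e)/2 (assuming ρ, γ, c, e > 0). In particular, at γ = (c+e)/2 the Jacobian has a purely imaginary conjugate pair of eigenvalues provided c ≠ e. -/

import Mathlib

/-- The three-species generalized Lotka-Volterra vector field. -/
noncomputable def glv3 (ρ γ c e : ℝ) (s : Fin 3 → ℝ) (i : Fin 3) : ℝ :=
  ρ * s i - γ * (s i) ^ 2 - s i * (c * s (i + 1) + e * s (i + 2))

/-- The Jacobian matrix of the vector field at a point. -/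
noncomputable def glv3Jac (ρ γ c e : ℝ) (p : Fin 3 → ℝ) :
    Matrix (Fin 3) (Fin 3) ℝ :=
  fun i j => fderiv ℝ (fun s => glv3 ρ γ c e s i) p (Pi.single j 1)

/-- The complexified Jacobian at the coexistence equilibrium, as a function of γ. -/
noncomputable def coexJac (ρ c e : ℝ) (γ : ℝ) : Matrix (Fin 3) (Fin 3) ℂ :=
  (glv3Jac ρ γ c e (fun _ => ρ / (γ + c + e))).map Complex.ofReal

noncomputable abbrev glvPr (i : Fin 3) : (Fin 3 → ℝ) →L[ℝ] ℝ := ContinuousLinearMap.proj i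

lemma glv3_hasFDeriv (ρ γ c e : ℝ) (p : Fin 3 → ℝ) (i : Fin 3) :
    HasFDerivAt (fun s : Fin 3 → ℝ => glv3 ρ γ c e s i)
      ((ρ • glvPr i - γ • (p i • glvPr i + p i • glvPr i)) -
        (p i • (c • glvPr (i+1) + e • glvPr (i+2)) +
          (c * p (i+1) + e * p (i+2)) • glvPr i)) p := by
  have h1 : HasFDerivAt (fun s : Fin 3 → ℝ => s i) (glvPr i) p := (glvPr i).hasFDerivAt
  have h2 : HasFDerivAt (fun s : Fin 3 → ℝ => s (i+1)) (glvPr (i+1)) p :=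
    (glvPr (i+1)).hasFDerivAt
  have h3 : HasFDerivAt (fun s : Fin 3 → ℝ => s (i+2)) (glvPr (i+2)) p :=
    (glvPr (i+2)).hasFDerivAt
  have hg : (fun s : Fin 3 → ℝ => glv3 ρ γ c e s i) =
      fun s : Fin 3 → ℝ => ρ * s i - γ * (s i * s i) - s i * (c * s (i+1) + e * s (i+2)) := by
    funext s; simp only [glv3]; ring
  rw [hg]
  exact ((h1.const_mul ρ).sub ((h1.mul h1).const_mul γ)).sub
    (h1.mul ((h2.const_mul c).add (h3.const_mul e)))

lemma glv3Jac_const (ρ γ c e s : ℝ) :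
    glv3Jac ρ γ c e (fun _ => s) =
      Matrix.of ![![ρ - 2*γ*s - (c*s + e*s), -(c*s), -(e*s)],
                  ![-(e*s), ρ - 2*γ*s - (c*s + e*s), -(c*s)],
                  ![-(c*s), -(e*s), ρ - 2*γ*s - (c*s + e*s)]] := by
  funext i j
  have h := (glv3_hasFDeriv ρ γ c e (fun _ => s) i).fderiv
  simp only [glv3Jac, h]
  fin_cases i <;> fin_cases j <;>
    simp [ContinuousLinearMap.proj_apply, Pi.single_apply, Fin.isValue] <;> ring

lemma sq_factor (w : ℂ) (B : ℝ) :
    w^2 + (B:ℂ)^2 = (w - B*Complex.I)*(w + B*Complex.I) := by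
  linear_combination ((B:ℂ)^2) * Complex.I_sq

lemma coexJac_spectrum (ρ c e γ s A B : ℝ) (hdiv : ρ / (γ + c + e) = s)
    (hs : ρ = s * (γ + c + e)) (hA : A = s * (γ - (c+e)/2))
    (hB : B = s * (Real.sqrt 3 / 2) * (c - e)) (z : ℂ) :
    z ∈ spectrum ℂ (coexJac ρ c e γ) ↔
      z = -(ρ:ℂ) ∨ z = -(A:ℂ) + (B:ℂ) * Complex.I ∨ z = -(A:ℂ) - (B:ℂ) * Complex.I := by
  have hB2 : ((B:ℝ) : ℂ)^2 = 3/4 * (s:ℂ)^2 * ((c:ℂ)-e)^2 := by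
    have h3 : (Real.sqrt 3 : ℂ)^2 = 3 := by
      have : (Real.sqrt 3)^2 = 3 := Real.sq_sqrt (by norm_num)
      exact_mod_cast congrArg Complex.ofReal this
    rw [hB]; push_cast; rw [mul_pow, mul_pow, div_pow, h3]; ring
  have hM : coexJac ρ c e γ = (glv3Jac ρ γ c e (fun _ => s)).map Complex.ofReal := by
    rw [coexJac, hdiv]
  rw [spectrum.mem_iff, Matrix.isUnit_iff_isUnit_det, isUnit_iff_ne_zero, not_not]
  have hdet : ((algebraMap ℂ (Matrix (Fin 3) (Fin 3) ℂ)) z - coexJac ρ c e γ).det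
      = (z + ρ) * ((z - (-(A:ℂ) + (B:ℂ) * Complex.I)) * (z - (-(A:ℂ) - (B:ℂ) * Complex.I))) := by
    have hfac : (z - (-(A:ℂ) + (B:ℂ) * Complex.I)) * (z - (-(A:ℂ) - (B:ℂ) * Complex.I))
        = (z + (A:ℂ))^2 + ((B:ℝ) : ℂ)^2 := by
      rw [sq_factor]; ring
    rw [hfac, hB2, hM, Matrix.det_fin_three]
    simp only [glv3Jac_const, Matrix.sub_apply, Matrix.map_apply,
      Matrix.algebraMap_matrix_apply, Matrix.of_apply, Matrix.cons_val', Matrix.cons_val_zero,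
      Matrix.empty_val', Matrix.cons_val_fin_one, Matrix.cons_val_one, Matrix.head_cons,
      Matrix.head_fin_const, Matrix.cons_val_two, Matrix.tail_cons]
    norm_num
    subst hs hA
    push_cast
    ring
  rw [hdet, mul_eq_zero, mul_eq_zero, sub_eq_zero, sub_eq_zero, add_eq_zero_iff_eq_neg]

theorem coexistence_stability_iff (ρ c e : ℝ) (hρ : 0 < ρ) (hc : 0 < c) (he : 0 < e) :
    (∀ γ : ℝ, 0 < γ →
      ((∀ z ∈ spectrum ℂ (coexJac ρ c e γ), z.re < 0) ↔ γ > (c + e) / 2)) ∧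
    (c ≠ e →
      ∃ z ∈ spectrum ℂ (coexJac ρ c e ((c + e) / 2)),
        z.re = 0 ∧ z.im ≠ 0 ∧ (starRingEnd ℂ) z ∈ spectrum ℂ (coexJac ρ c e ((c + e) / 2))) := by
  constructor
  · intro γ hγ
    have hsumpos : 0 < γ + c + e := by positivity
    set s : ℝ := ρ / (γ + c + e) with hsdef
    have hspos : 0 < s := by positivity
    have hs : ρ = s * (γ + c + e) := by rw [hsdef, div_mul_cancel₀ _ hsumpos.ne']
    set A : ℝ := s * (γ - (c+e)/2) with hAdef
    set B : ℝ := s * (Real.sqrt 3 / 2) * (c - e) with hBdef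
    have hspec := coexJac_spectrum ρ c e γ s A B rfl hs hAdef hBdef
    constructor
    · intro hall
      have hz : (-(A:ℂ) + (B:ℂ) * Complex.I) ∈ spectrum ℂ (coexJac ρ c e γ) := by
        rw [hspec]; tauto
      have h := hall _ hz
      simp only [Complex.add_re, Complex.neg_re, Complex.ofReal_re, Complex.mul_re,
        Complex.I_re, Complex.I_im, Complex.ofReal_im, mul_zero, zero_mul, mul_one,
        sub_zero, zero_sub, add_zero, neg_zero, neg_neg, add_neg_cancel] at h
      -- h : -A + ... < 0, essentially -A < 0
      have hA0 : 0 < A := by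
        by_contra hcon
        push_neg at hcon
        have : (0:ℝ) ≤ -A := by linarith
        nlinarith
      have : 0 < γ - (c+e)/2 := by
        by_contra hcon
        push_neg at hcon
        nlinarith
      linarith
    · intro hγ2 z hz
      rw [hspec] at hz
      have hA0 : 0 < A := by
        rw [hAdef]; apply mul_pos hspos; linarith
      rcases hz with h | h | h <;> subst h <;>
        simp only [Complex.add_re, Complex.sub_re, Complex.neg_re, Complex.ofReal_re,
          Complex.mul_re, Complex.I_re, Complex.I_im, Complex.ofReal_im, mul_zero,
          zero_mul, mul_one, sub_zero, zero_sub, add_zero, neg_zero, neg_neg] <;>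
        linarith
  · intro hce
    set γ : ℝ := (c+e)/2 with hγdef
    have hsumpos : 0 < γ + c + e := by positivity
    set s : ℝ := ρ / (γ + c + e) with hsdef
    have hspos : 0 < s := by positivity
    have hs : ρ = s * (γ + c + e) := by rw [hsdef, div_mul_cancel₀ _ hsumpos.ne']
    set B : ℝ := s * (Real.sqrt 3 / 2) * (c - e) with hBdef
    have hA0 : (0:ℝ) = s * (γ - (c+e)/2) := by rw [hγdef]; ring
    have hspec := coexJac_spectrum ρ c e γ s 0 B rfl hs hA0 hBdef
    have hBne : B ≠ 0 := by
      rw [hBdef]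
      exact mul_ne_zero (mul_ne_zero (ne_of_gt hspos) (by positivity))
        (sub_ne_zero.mpr hce)
    refine ⟨(B:ℂ) * Complex.I, ?_, ?_, ?_, ?_⟩
    · rw [hspec]; right; left; simp
    · simp
    · simpa using hBne
    · have hconj : (starRingEnd ℂ) ((B:ℂ) * Complex.I) = -(B:ℂ) * Complex.I := by
        rw [map_mul, Complex.conj_ofReal, Complex.conj_I]; ring
      rw [hconj, hspec]; right; right; push_cast; ring_nf
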